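/- Let I = {1,2} ⊆ L, let H_I be the subspace of H spanned by {f_∅, f_{(1)}, f_{(2)}, f_{(1,2)}}, and let U_I : H_I → H_I be the unitary with U_I f_∅ = f_{(1)}, U_I f_{(1)} = f_{(1,2)}, U_I f_{(1,2)} = f_{(2)}, U_I f_{(2)} = f_∅. Then, identifying a ∈ A(I) with its restriction a|_{H_I}, one has U_I* a_1 U_I = a_2*[a_1, a_1*], U_I a_1 U_I* = a_2[a_1, a_1*], U_I* a_2 U_I = a_1[a_2*, a_2], and U_I a_2 U_I* = a_1*[a_2, a_2*], where [x, y] = xy − yx. Moreover, for any λ ∈ [0,1] the map α(a) = λ U_I* a U_I + (1−λ) U_I a U_I* on A(I)|_{H_I} is even: it commutes with conjugation by the parity operator θ|_{H_I} (θ f_M = (−1)^{|M|} f_M). -/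

import Mathlib

noncomputable section
open scoped InnerProductSpace ComplexConjugate
open ContinuousLinearMap

namespace Fermion

variable (L : Type) [Fintype L] [LinearOrder L]

/-- The fermionic Fock space over the one-particle space `h = ℓ²(L)`, realized concretely
via its orthonormal basis indexed by the finite subsets of `L` (the vectors `f_M`). -/
abbrev FockSpace := EuclideanSpace ℂ (Finset L)

variable {L}

/-- The vacuum vector `Ψ = f_∅`. -/
def vac : FockSpace L := EuclideanSpace.single ∅ 1

/-- Jordan–Wigner sign factor. -/
def jwSign (l : L) (S : Finset L) : ℂ := (-1 : ℂ) ^ (S.filter (fun k => k < l)).card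

/-- The creation operator `a*_l = a*(e_l)`. -/
def cre (l : L) : FockSpace L →L[ℂ] FockSpace L :=
  LinearMap.toContinuousLinearMap <|
    (EuclideanSpace.basisFun (Finset L) ℂ).toBasis.constr ℂ fun S =>
      if l ∈ S then 0 else jwSign l S • EuclideanSpace.single (insert l S) 1

/-- The annihilation operator `a_l = a(e_l)`. -/
def ann (l : L) : FockSpace L →L[ℂ] FockSpace L := ContinuousLinearMap.adjoint (cre l)

/-- The vector `f_{(l_1,…,l_n)} = a*_{l_1} ⋯ a*_{l_n} Ψ  (= P (e_{l_1} ⊗ ⋯ ⊗ e_{l_n}))`. -/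
def fvec (M : List L) : FockSpace L := M.foldr (fun l v => cre l v) vac

/-- The algebra `A(I)` : the unital *-subalgebra of `B(H)` generated by `{a_l : l ∈ I}`. -/
def A (I : Finset L) : StarSubalgebra ℂ (FockSpace L →L[ℂ] FockSpace L) :=
  StarAlgebra.adjoin ℂ (ann '' (I : Set L))

/-- The trace on `B(H)`. -/
def Tr (T : FockSpace L →L[ℂ] FockSpace L) : ℂ := LinearMap.trace ℂ (FockSpace L) T

/-- The rank-one operator `|x⟩⟨y|`. -/
def ketbra (x y : FockSpace L) : FockSpace L →L[ℂ] FockSpace L :=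
  (ContinuousLinearMap.toSpanSingleton ℂ x).comp (innerSL ℂ y)

/-- A valid choice of `D_I`: `D S` enumerates the finite set `S` without repetitions. -/
def IsEnum (D : Finset L → List L) : Prop := ∀ S : Finset L, (D S).Nodup ∧ (D S).toFinset = S

/-- The entangled vector `Φ = Σ_{M ∈ D_I} p_M^{1/2} f_{M ι(M)}`. -/
def Phi (D : Finset L → List L) (p : Finset L → ℝ) (I : Finset L) (ι : L → L) : FockSpace L :=
  ∑ S ∈ I.powerset, (Real.sqrt (p S) : ℂ) • fvec (D S ++ (D S).map ι)

/-- The state `φ(x) = ⟨Φ, xΦ⟩`. -/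
def phi (D : Finset L → List L) (p : Finset L → ℝ) (I : Finset L) (ι : L → L)
    (x : FockSpace L →L[ℂ] FockSpace L) : ℂ :=
  ⟪Phi D p I ι, x (Phi D p I ι)⟫_ℂ

lemma cre_single (l : L) (S : Finset L) :
    cre l (EuclideanSpace.single S (1:ℂ)) =
      if l ∈ S then 0 else jwSign l S • EuclideanSpace.single (insert l S) (1:ℂ) := by
  have : EuclideanSpace.single S (1:ℂ) = (EuclideanSpace.basisFun (Finset L) ℂ).toBasis S := by
    simp [OrthonormalBasis.coe_toBasis, EuclideanSpace.basisFun_apply]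
  rw [cre, LinearMap.coe_toContinuousLinearMap', this, Module.Basis.constr_basis]

lemma jwSign_conj (l : L) (S : Finset L) : (starRingEnd ℂ) (jwSign l S) = jwSign l S := by
  simp [jwSign, map_pow]

set_option linter.unusedSectionVars false

lemma ann_single (l : L) (S : Finset L) :
    ann l (EuclideanSpace.single S (1:ℂ)) =
      if l ∈ S then jwSign l (S.erase l) • EuclideanSpace.single (S.erase l) (1:ℂ) else 0 := by
  refine PiLp.ext fun T => ?_
  have key : (ann l (EuclideanSpace.single S (1:ℂ))) T
      = ⟪cre l (EuclideanSpace.single T (1:ℂ)), EuclideanSpace.single S (1:ℂ)⟫_ℂ := by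
    have h1 : (ann l (EuclideanSpace.single S (1:ℂ))) T
        = ⟪EuclideanSpace.single T (1:ℂ), ann l (EuclideanSpace.single S (1:ℂ))⟫_ℂ := by
      rw [EuclideanSpace.inner_single_left]; simp
    rw [h1, ann, ContinuousLinearMap.adjoint_inner_right]
  rw [key, cre_single]
  by_cases hlS : l ∈ S <;> by_cases hlT : l ∈ T <;>
    simp only [hlS, hlT, if_true, if_false, inner_smul_left, EuclideanSpace.inner_single_left,
      EuclideanSpace.single_apply, inner_zero_left, PiLp.smul_apply, PiLp.zero_apply,
      smul_eq_mul, jwSign_conj, map_one, one_mul]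
  · have hT : T ≠ S.erase l := fun h => Finset.notMem_erase l S (h ▸ hlT)
    simp [hT]
  · by_cases hT : T = S.erase l
    · subst hT
      simp [Finset.insert_erase hlS]
    · have h2 : insert l T ≠ S := fun h => hT (by rw [← h, Finset.erase_insert hlT])
      simp [hT, h2]
  · have h2 : insert l T ≠ S := fun h => hlS (h ▸ Finset.mem_insert_self l T)
    simp [h2]

lemma jwSign_empty (l : L) : jwSign l ∅ = 1 := by simp [jwSign]

lemma jwSign_mul_self (l : L) (S : Finset L) : jwSign l S * jwSign l S = 1 := by
  rw [jwSign, ← pow_add]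
  exact Even.neg_one_pow ⟨_, rfl⟩

lemma jwSign_pair_mul (l₁ l₂ : L) (hne : l₁ ≠ l₂) :
    jwSign l₁ {l₂} * jwSign l₂ {l₁} = -1 := by
  rcases hne.lt_or_gt with h | h
  · have h1 : ({l₂} : Finset L).filter (fun k => k < l₁) = ∅ := by
      ext x; simp; rintro rfl; exact h.le
    have h2 : ({l₁} : Finset L).filter (fun k => k < l₂) = {l₁} := by
      ext x; simp; rintro rfl; exact h
    simp [jwSign, h1, h2]
  · have h1 : ({l₂} : Finset L).filter (fun k => k < l₁) = {l₂} := by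
      ext x; simp; rintro rfl; exact h
    have h2 : ({l₁} : Finset L).filter (fun k => k < l₂) = ∅ := by
      ext x; simp; rintro rfl; exact h.le
    simp [jwSign, h1, h2]

lemma fvec_nil : fvec ([] : List L) = EuclideanSpace.single ∅ (1:ℂ) := rfl

lemma fvec_one (l : L) : fvec [l] = EuclideanSpace.single {l} (1:ℂ) := by
  show cre l (EuclideanSpace.single ∅ (1:ℂ)) = _
  rw [cre_single]
  simp [jwSign_empty]

lemma fvec_two (l₁ l₂ : L) (hne : l₁ ≠ l₂) :
    fvec [l₁, l₂] = jwSign l₁ {l₂} • EuclideanSpace.single ({l₁, l₂} : Finset L) (1:ℂ) := by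
  show cre l₁ (fvec [l₂]) = _
  rw [fvec_one, cre_single, if_neg (by simpa using hne)]

section
variable {l₁ l₂ : L} (hne : l₁ ≠ l₂)

lemma ann_vac (l : L) : ann l (fvec ([] : List L)) = 0 := by
  rw [fvec_nil, ann_single]; simp

lemma ann_self (l : L) : ann l (fvec [l]) = fvec ([] : List L) := by
  rw [fvec_one, ann_single, if_pos (Finset.mem_singleton_self l), fvec_nil]
  simp [jwSign_empty]

include hne in
lemma ann_other : ann l₁ (fvec [l₂]) = 0 := by
  rw [fvec_one, ann_single, if_neg (by simpa using hne)]

lemma cre_vac (l : L) : cre l (fvec ([] : List L)) = fvec [l] := rfl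

lemma cre_self (l : L) : cre l (fvec [l]) = 0 := by
  rw [fvec_one, cre_single, if_pos (Finset.mem_singleton_self l)]

lemma cre_pair : cre l₁ (fvec [l₂]) = fvec [l₁, l₂] := rfl

include hne in
lemma cre_pair' : cre l₂ (fvec [l₁]) = -fvec [l₁, l₂] := by
  rw [fvec_one, cre_single, if_neg (by simpa using hne.symm), fvec_two l₁ l₂ hne]
  have hc : ({l₂, l₁} : Finset L) = {l₁, l₂} := Finset.pair_comm l₂ l₁
  rw [hc, ← neg_smul]
  congr 1
  have := jwSign_pair_mul l₁ l₂ hne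
  have h2 := jwSign_mul_self l₁ ({l₂} : Finset L)
  have : jwSign l₂ {l₁} = jwSign l₁ {l₂} * (jwSign l₁ {l₂} * jwSign l₂ {l₁}) := by
    rw [← mul_assoc, h2, one_mul]
  rw [this, jwSign_pair_mul l₁ l₂ hne]; ring

include hne in
lemma cre_two_left : cre l₁ (fvec [l₁, l₂]) = 0 := by
  rw [fvec_two l₁ l₂ hne, map_smul, cre_single, if_pos (Finset.mem_insert_self l₁ {l₂})]
  simp

include hne in
lemma cre_two_right : cre l₂ (fvec [l₁, l₂]) = 0 := by
  rw [fvec_two l₁ l₂ hne, map_smul, cre_single,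
    if_pos (Finset.mem_insert_of_mem (Finset.mem_singleton_self l₂))]
  simp

include hne in
lemma ann_two_left : ann l₁ (fvec [l₁, l₂]) = fvec [l₂] := by
  rw [fvec_two l₁ l₂ hne, map_smul, ann_single, if_pos (Finset.mem_insert_self l₁ {l₂})]
  rw [Finset.erase_insert (by simpa using hne), fvec_one]
  rw [smul_smul, jwSign_mul_self, one_smul]

include hne in
lemma ann_two_right : ann l₂ (fvec [l₁, l₂]) = -fvec [l₁] := by
  rw [fvec_two l₁ l₂ hne, map_smul, ann_single,
    if_pos (Finset.mem_insert_of_mem (Finset.mem_singleton_self l₂))]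
  have he : ({l₁, l₂} : Finset L).erase l₂ = {l₁} := by
    rw [Finset.erase_insert_of_ne hne]
    simp
  rw [he, fvec_one, smul_smul, jwSign_pair_mul l₁ l₂ hne]
  simp

end

lemma star_ann (l : L) : star (ann l) = cre l := by
  rw [ann, ContinuousLinearMap.star_eq_adjoint, ContinuousLinearMap.adjoint_adjoint]

set_option maxHeartbeats 1000000

/-- Let `I = {1,2} ⊆ L` (two distinct sites `l₁, l₂`), let `H_I` be the
subspace of `H` spanned by `{f_∅, f_{(1)}, f_{(2)}, f_{(1,2)}}`, and let `U_I : H_I → H_I` be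
the unitary with `U_I f_∅ = f_{(1)}`, `U_I f_{(1)} = f_{(1,2)}`, `U_I f_{(1,2)} = f_{(2)}`,
`U_I f_{(2)} = f_∅` (here `U` is an operator on `H` implementing `U_I` on `H_I`, with `U*`
implementing `U_I*`). Then, identifying elements of `A(I)` with their restrictions to `H_I`:
`U_I* a₁ U_I = a₂*[a₁,a₁*]`, `U_I a₁ U_I* = a₂[a₁,a₁*]`, `U_I* a₂ U_I = a₁[a₂*,a₂]` and
`U_I a₂ U_I* = a₁*[a₂,a₂*]`. Moreover, for any `λ ∈ [0,1]` the map
`α(a) = λ U_I* a U_I + (1-λ) U_I a U_I*` on `A(I)|_{H_I}` is even: it commutes with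
conjugation by the parity operator `θ|_{H_I}` (`θ f_M = (-1)^{|M|} f_M`). -/
theorem four_cycle_dynamics_formulas_and_even
    {L : Type} [Fintype L] [LinearOrder L]
    (l₁ l₂ : L) (hne : l₁ ≠ l₂)
    (U : FockSpace L →L[ℂ] FockSpace L)
    (hU1 : U (fvec ([] : List L)) = fvec [l₁])
    (hU2 : U (fvec [l₁]) = fvec [l₁, l₂])
    (hU3 : U (fvec [l₁, l₂]) = fvec [l₂])
    (hU4 : U (fvec [l₂]) = fvec ([] : List L))
    (hUs1 : star U (fvec [l₁]) = fvec ([] : List L))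
    (hUs2 : star U (fvec [l₁, l₂]) = fvec [l₁])
    (hUs3 : star U (fvec [l₂]) = fvec [l₁, l₂])
    (hUs4 : star U (fvec ([] : List L)) = fvec [l₂])
    (θ : FockSpace L →L[ℂ] FockSpace L)
    (hθ : ∀ M : List L, θ (fvec M) = ((-1 : ℂ) ^ M.length) • fvec M) :
    (∀ v ∈ Submodule.span ℂ {fvec ([] : List L), fvec [l₁], fvec [l₂], fvec [l₁, l₂]},
      (star U * ann l₁ * U) v
        = (star (ann l₂) * (ann l₁ * star (ann l₁) - star (ann l₁) * ann l₁)) v) ∧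
    (∀ v ∈ Submodule.span ℂ {fvec ([] : List L), fvec [l₁], fvec [l₂], fvec [l₁, l₂]},
      (U * ann l₁ * star U) v
        = (ann l₂ * (ann l₁ * star (ann l₁) - star (ann l₁) * ann l₁)) v) ∧
    (∀ v ∈ Submodule.span ℂ {fvec ([] : List L), fvec [l₁], fvec [l₂], fvec [l₁, l₂]},
      (star U * ann l₂ * U) v
        = (ann l₁ * (star (ann l₂) * ann l₂ - ann l₂ * star (ann l₂))) v) ∧
    (∀ v ∈ Submodule.span ℂ {fvec ([] : List L), fvec [l₁], fvec [l₂], fvec [l₁, l₂]},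
      (U * ann l₂ * star U) v
        = (star (ann l₁) * (ann l₂ * star (ann l₂) - star (ann l₂) * ann l₂)) v) ∧
    (∀ lam : ℝ, 0 ≤ lam → lam ≤ 1 →
      ∀ a ∈ A ({l₁, l₂} : Finset L),
        ∀ v ∈ Submodule.span ℂ {fvec ([] : List L), fvec [l₁], fvec [l₂], fvec [l₁, l₂]},
          ((lam : ℂ) • (star U * (θ * a * θ) * U)
              + ((1 - lam : ℝ) : ℂ) • (U * (θ * a * θ) * star U)) v
            = (θ * ((lam : ℂ) • (star U * a * U)
              + ((1 - lam : ℝ) : ℂ) • (U * a * star U)) * θ) v) := by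

  set V : Submodule ℂ (FockSpace L) :=
    Submodule.span ℂ {fvec ([] : List L), fvec [l₁], fvec [l₂], fvec [l₁, l₂]} with hV
  have hspan : ∀ T S : FockSpace L →L[ℂ] FockSpace L,
      T (fvec ([] : List L)) = S (fvec ([] : List L)) → T (fvec [l₁]) = S (fvec [l₁]) →
      T (fvec [l₂]) = S (fvec [l₂]) → T (fvec [l₁, l₂]) = S (fvec [l₁, l₂]) →
      ∀ v ∈ V, T v = S v := by
    intro T S h0 h1 h2 h3 v hv
    induction hv using Submodule.span_induction with
    | mem x hx =>
      rcases hx with rfl | rfl | rfl | hx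
      · exact h0
      · exact h1
      · exact h2
      · rw [Set.mem_singleton_iff] at hx; rw [hx]; exact h3
    | zero => rw [map_zero, map_zero]
    | add x y hx hy ihx ihy => rw [map_add, map_add, ihx, ihy]
    | smul c x hx ihx => rw [map_smul, map_smul, ihx]
  have hgen0 : fvec ([] : List L) ∈ V := Submodule.subset_span (Set.mem_insert _ _)
  have hgen1 : fvec [l₁] ∈ V :=
    Submodule.subset_span (Set.mem_insert_of_mem _ (Set.mem_insert _ _))
  have hgen2 : fvec [l₂] ∈ V :=
    Submodule.subset_span (Set.mem_insert_of_mem _ (Set.mem_insert_of_mem _ (Set.mem_insert _ _)))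
  have hgen3 : fvec [l₁, l₂] ∈ V :=
    Submodule.subset_span (Set.mem_insert_of_mem _ (Set.mem_insert_of_mem _
      (Set.mem_insert_of_mem _ rfl)))
  have hmemspan : ∀ T : FockSpace L →L[ℂ] FockSpace L,
      T (fvec ([] : List L)) ∈ V → T (fvec [l₁]) ∈ V →
      T (fvec [l₂]) ∈ V → T (fvec [l₁, l₂]) ∈ V →
      ∀ v ∈ V, T v ∈ V := by
    intro T h0 h1 h2 h3 v hv
    induction hv using Submodule.span_induction with
    | mem x hx =>
      rcases hx with rfl | rfl | rfl | hx
      · exact h0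
      · exact h1
      · exact h2
      · rw [Set.mem_singleton_iff] at hx; rw [hx]; exact h3
    | zero => rw [map_zero]; exact V.zero_mem
    | add x y hx hy ihx ihy => rw [map_add]; exact V.add_mem ihx ihy
    | smul c x hx ihx => rw [map_smul]; exact V.smul_mem c ihx
  have hθ0 : θ (fvec ([] : List L)) = fvec ([] : List L) := by
    have h := hθ []
    rw [List.length_nil, pow_zero, one_smul] at h
    exact h
  have hθ1 : θ (fvec [l₁]) = -fvec [l₁] := by
    have h := hθ [l₁]
    rw [List.length_singleton, pow_one, neg_smul, one_smul] at h
    exact h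
  have hθ2 : θ (fvec [l₂]) = -fvec [l₂] := by
    have h := hθ [l₂]
    rw [List.length_singleton, pow_one, neg_smul, one_smul] at h
    exact h
  have hθ3 : θ (fvec [l₁, l₂]) = fvec [l₁, l₂] := by
    have h := hθ [l₁, l₂]
    norm_num at h
    exact h
  refine ⟨?_, ?_, ?_, ?_, ?_⟩
  · exact hspan _ _
      (by
      show star U (ann l₁ (U (fvec ([] : List L)))) = star (ann l₂) (ann l₁ (star (ann l₁) (fvec ([] : List L))) - star (ann l₁) (ann l₁ (fvec ([] : List L))))
      rw [hU1, ann_self l₁, hUs4, star_ann, star_ann, cre_vac l₁, ann_self l₁, ann_vac l₁, map_zero, sub_zero, cre_vac l₂])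
      (by
      show star U (ann l₁ (U (fvec [l₁]))) = star (ann l₂) (ann l₁ (star (ann l₁) (fvec [l₁])) - star (ann l₁) (ann l₁ (fvec [l₁])))
      rw [hU2, ann_two_left hne, hUs3, star_ann, star_ann, cre_self l₁, map_zero, ann_self l₁, cre_vac l₁, zero_sub, map_neg, cre_pair' hne, neg_neg])
      (by
      show star U (ann l₁ (U (fvec [l₂]))) = star (ann l₂) (ann l₁ (star (ann l₁) (fvec [l₂])) - star (ann l₁) (ann l₁ (fvec [l₂])))
      rw [hU4, ann_vac l₁, map_zero, star_ann, star_ann, cre_pair, ann_two_left hne, ann_other hne, map_zero, sub_zero, cre_self l₂])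
      (by
      show star U (ann l₁ (U (fvec [l₁, l₂]))) = star (ann l₂) (ann l₁ (star (ann l₁) (fvec [l₁, l₂])) - star (ann l₁) (ann l₁ (fvec [l₁, l₂])))
      rw [hU3, ann_other hne, map_zero, star_ann, star_ann, cre_two_left hne, map_zero, ann_two_left hne, cre_pair, zero_sub, map_neg, cre_two_right hne, neg_zero])
  · exact hspan _ _
      (by
      show U (ann l₁ (star U (fvec ([] : List L)))) = ann l₂ (ann l₁ (star (ann l₁) (fvec ([] : List L))) - star (ann l₁) (ann l₁ (fvec ([] : List L))))
      rw [hUs4, ann_other hne, map_zero, star_ann, cre_vac l₁, ann_self l₁, ann_vac l₁, map_zero, sub_zero, ann_vac l₂])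
      (by
      show U (ann l₁ (star U (fvec [l₁]))) = ann l₂ (ann l₁ (star (ann l₁) (fvec [l₁])) - star (ann l₁) (ann l₁ (fvec [l₁])))
      rw [hUs1, ann_vac l₁, map_zero, star_ann, cre_self l₁, map_zero, ann_self l₁, cre_vac l₁, zero_sub, map_neg, ann_other hne.symm, neg_zero])
      (by
      show U (ann l₁ (star U (fvec [l₂]))) = ann l₂ (ann l₁ (star (ann l₁) (fvec [l₂])) - star (ann l₁) (ann l₁ (fvec [l₂])))
      rw [hUs3, ann_two_left hne, hU4, star_ann, cre_pair, ann_two_left hne, ann_other hne, map_zero, sub_zero, ann_self l₂])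
      (by
      show U (ann l₁ (star U (fvec [l₁, l₂]))) = ann l₂ (ann l₁ (star (ann l₁) (fvec [l₁, l₂])) - star (ann l₁) (ann l₁ (fvec [l₁, l₂])))
      rw [hUs2, ann_self l₁, hU1, star_ann, cre_two_left hne, map_zero, ann_two_left hne, cre_pair, zero_sub, map_neg, ann_two_right hne, neg_neg])
  · exact hspan _ _
      (by
      show star U (ann l₂ (U (fvec ([] : List L)))) = ann l₁ (star (ann l₂) (ann l₂ (fvec ([] : List L))) - ann l₂ (star (ann l₂) (fvec ([] : List L))))
      rw [hU1, ann_other hne.symm, map_zero, star_ann, ann_vac l₂, map_zero, cre_vac l₂, ann_self l₂, zero_sub, map_neg, ann_vac l₁, neg_zero])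
      (by
      show star U (ann l₂ (U (fvec [l₁]))) = ann l₁ (star (ann l₂) (ann l₂ (fvec [l₁])) - ann l₂ (star (ann l₂) (fvec [l₁])))
      rw [hU2, ann_two_right hne, map_neg, hUs1, star_ann, ann_other hne.symm, map_zero, cre_pair' hne, map_neg, ann_two_right hne, neg_neg, zero_sub, map_neg, ann_self l₁])
      (by
      show star U (ann l₂ (U (fvec [l₂]))) = ann l₁ (star (ann l₂) (ann l₂ (fvec [l₂])) - ann l₂ (star (ann l₂) (fvec [l₂])))
      rw [hU4, ann_vac l₂, map_zero, star_ann, ann_self l₂, cre_vac l₂, cre_self l₂, map_zero, sub_zero, ann_other hne])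
      (by
      show star U (ann l₂ (U (fvec [l₁, l₂]))) = ann l₁ (star (ann l₂) (ann l₂ (fvec [l₁, l₂])) - ann l₂ (star (ann l₂) (fvec [l₁, l₂])))
      rw [hU3, ann_self l₂, hUs4, star_ann, ann_two_right hne, map_neg, cre_pair' hne, neg_neg, cre_two_right hne, map_zero, sub_zero, ann_two_left hne])
  · exact hspan _ _
      (by
      show U (ann l₂ (star U (fvec ([] : List L)))) = star (ann l₁) (ann l₂ (star (ann l₂) (fvec ([] : List L))) - star (ann l₂) (ann l₂ (fvec ([] : List L))))
      rw [hUs4, ann_self l₂, hU1, star_ann, star_ann, cre_vac l₂, ann_self l₂, ann_vac l₂, map_zero, sub_zero, cre_vac l₁])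
      (by
      show U (ann l₂ (star U (fvec [l₁]))) = star (ann l₁) (ann l₂ (star (ann l₂) (fvec [l₁])) - star (ann l₂) (ann l₂ (fvec [l₁])))
      rw [hUs1, ann_vac l₂, map_zero, star_ann, star_ann, cre_pair' hne, map_neg, ann_two_right hne, neg_neg, ann_other hne.symm, map_zero, sub_zero, cre_self l₁])
      (by
      show U (ann l₂ (star U (fvec [l₂]))) = star (ann l₁) (ann l₂ (star (ann l₂) (fvec [l₂])) - star (ann l₂) (ann l₂ (fvec [l₂])))
      rw [hUs3, ann_two_right hne, map_neg, hU2, star_ann, star_ann, cre_self l₂, map_zero, ann_self l₂, cre_vac l₂, zero_sub, map_neg, cre_pair])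
      (by
      show U (ann l₂ (star U (fvec [l₁, l₂]))) = star (ann l₁) (ann l₂ (star (ann l₂) (fvec [l₁, l₂])) - star (ann l₂) (ann l₂ (fvec [l₁, l₂])))
      rw [hUs2, ann_other hne.symm, map_zero, star_ann, star_ann, cre_two_right hne, map_zero, ann_two_right hne, map_neg, cre_pair' hne, neg_neg, zero_sub, map_neg, cre_two_left hne, neg_zero])
  · intro lam _ _ a ha v hv
    have hUV : ∀ v ∈ V, U v ∈ V :=
      hmemspan U (hU1 ▸ hgen1) (hU2 ▸ hgen3) (hU4 ▸ hgen0) (hU3 ▸ hgen2)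
    have hUsV : ∀ v ∈ V, star U v ∈ V :=
      hmemspan (star U) (hUs4 ▸ hgen2) (hUs1 ▸ hgen0) (hUs3 ▸ hgen3) (hUs2 ▸ hgen1)
    have hθV : ∀ v ∈ V, θ v ∈ V :=
      hmemspan θ (by rw [hθ0]; exact hgen0) (by rw [hθ1]; exact V.neg_mem hgen1)
        (by rw [hθ2]; exact V.neg_mem hgen2) (by rw [hθ3]; exact hgen3)
    have hannV : ∀ l ∈ ({l₁, l₂} : Finset L), ∀ v ∈ V, ann l v ∈ V := by
      intro l hl
      rcases Finset.mem_insert.1 hl with rfl | hl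
      · exact hmemspan (ann l) (by rw [ann_vac]; exact V.zero_mem)
          (by rw [ann_self]; exact hgen0) (by rw [ann_other hne]; exact V.zero_mem)
          (by rw [ann_two_left hne]; exact hgen2)
      · rw [Finset.mem_singleton] at hl; subst hl
        exact hmemspan (ann l) (by rw [ann_vac]; exact V.zero_mem)
          (by rw [ann_other hne.symm]; exact V.zero_mem) (by rw [ann_self]; exact hgen0)
          (by rw [ann_two_right hne]; exact V.neg_mem hgen1)
    have hcreV : ∀ l ∈ ({l₁, l₂} : Finset L), ∀ v ∈ V, cre l v ∈ V := by
      intro l hl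
      rcases Finset.mem_insert.1 hl with rfl | hl
      · exact hmemspan (cre l) (by rw [cre_vac]; exact hgen1)
          (by rw [cre_self]; exact V.zero_mem) (by rw [cre_pair]; exact hgen3)
          (by rw [cre_two_left hne]; exact V.zero_mem)
      · rw [Finset.mem_singleton] at hl; subst hl
        exact hmemspan (cre l) (by rw [cre_vac]; exact hgen2)
          (by rw [cre_pair' hne]; exact V.neg_mem hgen3) (by rw [cre_self]; exact V.zero_mem)
          (by rw [cre_two_right hne]; exact V.zero_mem)
    have hAV : ∀ b ∈ A ({l₁, l₂} : Finset L),
        (∀ v ∈ V, b v ∈ V) ∧ (∀ v ∈ V, star b v ∈ V) := by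
      intro b hb
      induction hb using StarAlgebra.adjoin_induction with
      | mem x hx =>
        obtain ⟨l, hl, rfl⟩ := hx
        have hl' : l ∈ ({l₁, l₂} : Finset L) := by exact_mod_cast hl
        exact ⟨hannV l hl', by rw [star_ann]; exact hcreV l hl'⟩
      | algebraMap r =>
        constructor <;> intro w hw
        · have h : (algebraMap ℂ (FockSpace L →L[ℂ] FockSpace L) r) w = r • w := by
            rw [Algebra.algebraMap_eq_smul_one, ContinuousLinearMap.smul_apply,
              ContinuousLinearMap.one_apply]
          rw [h]; exact V.smul_mem r hw
        · have h : star (algebraMap ℂ (FockSpace L →L[ℂ] FockSpace L) r) w = (star r) • w := by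
            rw [Algebra.algebraMap_eq_smul_one, star_smul, star_one,
              ContinuousLinearMap.smul_apply, ContinuousLinearMap.one_apply]
          rw [h]; exact V.smul_mem (star r) hw
      | add x y hx hy ihx ihy =>
        constructor <;> intro w hw
        · rw [ContinuousLinearMap.add_apply]; exact V.add_mem (ihx.1 w hw) (ihy.1 w hw)
        · convert V.add_mem (ihx.2 w hw) (ihy.2 w hw) using 1
          rw [← ContinuousLinearMap.add_apply]; exact congrArg (fun T => T w) (star_add x y)
      | mul x y hx hy ihx ihy =>
        constructor <;> intro w hw
        · rw [ContinuousLinearMap.mul_apply]; exact ihx.1 _ (ihy.1 w hw)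
        · rw [star_mul, ContinuousLinearMap.mul_apply]; exact ihy.2 _ (ihx.2 w hw)
      | star x hx ihx => exact ⟨ihx.2, by rw [star_star]; exact ihx.1⟩
    have hUθ : ∀ w ∈ V, U (θ w) = -θ (U w) := by
      have h := hspan (U * θ) (-(θ * U))
        (by show U (θ (fvec ([] : List L))) = -(θ (U (fvec ([] : List L))))
            rw [hθ0, hU1, hθ1, neg_neg])
        (by show U (θ (fvec [l₁])) = -(θ (U (fvec [l₁])))
            rw [hθ1, map_neg, hU2, hθ3])
        (by show U (θ (fvec [l₂])) = -(θ (U (fvec [l₂])))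
            rw [hθ2, map_neg, hU4, hθ0])
        (by show U (θ (fvec [l₁, l₂])) = -(θ (U (fvec [l₁, l₂])))
            rw [hθ3, hU3, hθ2, neg_neg])
      intro w hw
      exact h w hw
    have hUsθ : ∀ w ∈ V, star U (θ w) = -θ (star U w) := by
      have h := hspan (star U * θ) (-(θ * star U))
        (by show star U (θ (fvec ([] : List L))) = -(θ (star U (fvec ([] : List L))))
            rw [hθ0, hUs4, hθ2, neg_neg])
        (by show star U (θ (fvec [l₁])) = -(θ (star U (fvec [l₁])))
            rw [hθ1, map_neg, hUs1, hθ0])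
        (by show star U (θ (fvec [l₂])) = -(θ (star U (fvec [l₂])))
            rw [hθ2, map_neg, hUs3, hθ3])
        (by show star U (θ (fvec [l₁, l₂])) = -(θ (star U (fvec [l₁, l₂])))
            rw [hθ3, hUs2, hθ1, neg_neg])
      intro w hw
      exact h w hw
    have key : ∀ W W' : FockSpace L →L[ℂ] FockSpace L,
        (∀ w ∈ V, W (θ w) = -θ (W w)) → (∀ w ∈ V, W' (θ w) = -θ (W' w)) →
        (∀ w ∈ V, W w ∈ V) →
        W' (θ (a (θ (W v)))) = θ (W' (a (W (θ v)))) := by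
      intro W W' hWa hW'a hWV'
      have hz : a (θ (W v)) ∈ V := (hAV a ha).1 _ (hθV _ (hWV' v hv))
      rw [hWa v hv, map_neg, map_neg, map_neg]
      exact hW'a _ hz
    show (lam : ℂ) • (star U (θ (a (θ (U v)))))
        + ((1 - lam : ℝ) : ℂ) • (U (θ (a (θ (star U v)))))
      = θ ((lam : ℂ) • (star U (a (U (θ v))))
        + ((1 - lam : ℝ) : ℂ) • (U (a (star U (θ v)))))
    rw [map_add, map_smul, map_smul, key U (star U) hUθ hUsθ hUV,
      key (star U) U hUsθ hUθ hUsV]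

end Fermion
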